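/- Let (λ_n)_{n∈ℕ} be a strictly increasing sequence of positive real numbers with λ_n → ∞, and let (c_n)_{n∈ℕ} be real numbers with Σ_n |c_n|/λ_n < ∞. If Σ_n c_n/(p + λ_n) = 0 for every p > 0, then c_n = 0 for every n. -/

import Mathlib

open Filter Topology

/-- Vanishing of the meromorphic function `H(p) = Σ cₙ/(p + λₙ)` for all `p > 0`
forces all residues `cₙ` to vanish, the poles `−λₙ` being distinct. -/
theorem residues_vanish_of_H_vanishes
    (lam c : ℕ → ℝ) (hmono : StrictMono lam) (hpos : ∀ n, 0 < lam n)
    (htend : Tendsto lam atTop atTop)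
    (hsum : Summable fun n => |c n| / lam n)
    (hzero : ∀ p > (0:ℝ), ∑' n, c n / (p + lam n) = 0) :
    ∀ n, c n = 0 := by
  -- pivots
  set q : ℕ → ℝ := fun j => 1 + (1/2) ^ (j + 1) with hq_def
  have hq1 : ∀ j, 1 < q j := by
    intro j
    have : (0:ℝ) < (1/2) ^ (j+1) := by positivity
    simp only [hq_def]; linarith
  have hq2 : ∀ j, q j ≤ 2 := by
    intro j
    have : (1/2:ℝ) ^ (j+1) ≤ 1 := pow_le_one₀ (by norm_num) (by norm_num)
    simp only [hq_def]; linarith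
  have hq_step : ∀ m, q (m+1) < q m := by
    intro m
    have h : (1/2:ℝ) ^ (m+1+1) < (1/2) ^ (m+1) := by
      rw [pow_succ]
      nlinarith [pow_pos (by norm_num : (0:ℝ) < 1/2) (m+1)]
    simp only [hq_def]; linarith
  set w : ℕ → ℕ → ℝ := fun m n => ∏ j ∈ Finset.range m, (q j + lam n)⁻¹ with hw_def
  have hqlam : ∀ j n, 0 < q j + lam n := fun j n => by
    have := hq1 j; have := hpos n; linarith
  have hw_pos : ∀ m n, 0 < w m n := by
    intro m n
    exact Finset.prod_pos fun j _ => inv_pos.2 (hqlam j n)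
  have hw_le1 : ∀ m n, w m n ≤ 1 := by
    intro m n
    apply Finset.prod_le_one
    · intro j _; exact (inv_pos.2 (hqlam j n)).le
    · intro j _
      apply inv_le_one_of_one_le₀
      have := hq1 j; have := hpos n; linarith
  have hw_succ : ∀ m n, w (m+1) n = w m n * (q m + lam n)⁻¹ := by
    intro m n
    simp only [hw_def]
    exact Finset.prod_range_succ _ _
  have hsummable : ∀ (m : ℕ) (p : ℝ), 0 < p →
      Summable (fun n => c n * w m n / (p + lam n)) := by
    intro m p hp
    apply Summable.of_norm_bounded hsum
    intro n
    have h1 : 0 < p + lam n := by have := hpos n; linarith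
    rw [Real.norm_eq_abs, abs_div, abs_mul, abs_of_pos (hw_pos m n), abs_of_pos h1]
    calc |c n| * w m n / (p + lam n) ≤ |c n| * 1 / (p + lam n) := by
          gcongr
          exact hw_le1 m n
      _ = |c n| / (p + lam n) := by ring
      _ ≤ |c n| / lam n := by
          gcongr
          · exact hpos n
          · linarith
  have hClaim : ∀ m, ∀ p : ℝ, 0 < p → p ≤ q m →
      ∑' n, c n * w m n / (p + lam n) = 0 := by
    intro m
    induction m with
    | zero =>
      intro p hp _
      have h : ∀ n, c n * w 0 n / (p + lam n) = c n / (p + lam n) := by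
        intro n
        simp [hw_def]
      rw [tsum_congr h]
      exact hzero p hp
    | succ m IH =>
      intro p hp hpq
      have hpltq : p < q m := lt_of_le_of_lt hpq (hq_step m)
      have hA := IH p hp hpltq.le
      have hB := IH (q m) (lt_trans one_pos (hq1 m)) le_rfl
      have key : ∀ n, c n * w (m+1) n / (p + lam n)
          = (q m - p)⁻¹ * (c n * w m n / (p + lam n) - c n * w m n / (q m + lam n)) := by
        intro n
        have h1 : p + lam n ≠ 0 := ne_of_gt (by have := hpos n; linarith)
        have h2 : q m + lam n ≠ 0 := (hqlam m n).ne'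
        have h3 : q m - p ≠ 0 := ne_of_gt (by linarith)
        rw [hw_succ]
        field_simp
        ring
      rw [tsum_congr key, tsum_mul_left,
        Summable.tsum_sub (hsummable m p hp) (hsummable m (q m) (lt_trans one_pos (hq1 m))),
        hA, hB, sub_zero, mul_zero]
  -- main conclusion by strong induction
  intro n
  induction n using Nat.strong_induction_on with
  | _ N ih =>
  set r : ℕ → ℝ := fun k => (2 + lam N) / (2 + lam k) with hr_def
  have hrpos : ∀ k, 0 < r k := by
    intro k
    exact div_pos (by have := hpos N; linarith) (by have := hpos k; linarith)
  set f : ℕ → ℕ → ℝ := fun m k => c k * (w m k / w m N) / (1 + lam k) with hf_def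
  have hftsum : ∀ m, ∑' k, f m k = 0 := by
    intro m
    have h1 : ∀ k, f m k = (w m N)⁻¹ * (c k * w m k / (1 + lam k)) := by
      intro k; simp only [hf_def]; ring
    rw [tsum_congr h1, tsum_mul_left, hClaim m 1 one_pos (hq1 m).le, mul_zero]
  have hratio : ∀ k, lam N ≤ lam k → ∀ m, w m k ≤ r k ^ m * w m N := by
    intro k hk m
    induction m with
    | zero => simp [hw_def]
    | succ m IHm =>
      have hfac : (q m + lam k)⁻¹ ≤ r k * (q m + lam N)⁻¹ := by
        have hA : 0 < q m + lam k := hqlam m k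
        have hB : 0 < q m + lam N := hqlam m N
        have hC : 0 < 2 + lam k := by have := hpos k; linarith
        rw [hr_def]
        rw [inv_eq_one_div, inv_eq_one_div, div_mul_div_comm, div_le_div_iff₀ hA (by positivity)]
        nlinarith [mul_nonneg (sub_nonneg.2 (hq2 m)) (sub_nonneg.2 hk)]
      calc w (m+1) k = w m k * (q m + lam k)⁻¹ := hw_succ m k
        _ ≤ (r k ^ m * w m N) * (r k * (q m + lam N)⁻¹) := by
            apply mul_le_mul IHm hfac (inv_pos.2 (hqlam m k)).le
            exact mul_nonneg (pow_nonneg (hrpos k).le m) (hw_pos m N).le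
        _ = r k ^ (m+1) * w (m+1) N := by
            rw [hw_succ, pow_succ]; ring
  have hratio_le : ∀ k, lam N ≤ lam k → ∀ m, w m k / w m N ≤ r k ^ m := by
    intro k hk m
    rw [div_le_iff₀ (hw_pos m N)]
    exact hratio k hk m
  set g : ℕ → ℝ := fun k => if k = N then c N / (1 + lam N) else 0 with hg_def
  have hg : ∀ k, Tendsto (fun m => f m k) atTop (𝓝 (g k)) := by
    intro k
    rcases lt_trichotomy k N with hlt | heq | hgt
    · have h0 : ∀ m, f m k = 0 := by
        intro m; simp [hf_def, ih k hlt]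
      have : g k = 0 := by simp [hg_def, Nat.ne_of_lt hlt]
      rw [this]
      simpa [h0] using (tendsto_const_nhds : Tendsto (fun _ : ℕ => (0:ℝ)) atTop (𝓝 0))
    · subst heq
      have h0 : ∀ m, f m k = c k / (1 + lam k) := by
        intro m
        simp only [hf_def]
        rw [div_self (hw_pos m k).ne']
        ring
      have : g k = c k / (1 + lam k) := by simp [hg_def]
      rw [this]
      simpa [h0] using
        (tendsto_const_nhds : Tendsto (fun _ : ℕ => c k / (1 + lam k)) atTop (𝓝 (c k / (1 + lam k))))
    · have hk : lam N < lam k := hmono hgt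
      have hr1 : r k < 1 := by
        rw [hr_def]
        exact (div_lt_one (by have := hpos k; linarith)).2 (by linarith)
      have : g k = 0 := by simp [hg_def, Nat.ne_of_gt hgt]
      rw [this]
      apply squeeze_zero_norm (a := fun m => |c k| / (1 + lam k) * r k ^ m)
      · intro m
        have h1 : 0 < 1 + lam k := by have := hpos k; linarith
        have hnorm : ‖f m k‖ = |c k| * (w m k / w m N) / (1 + lam k) := by
          simp only [hf_def, Real.norm_eq_abs, abs_div, abs_mul,
            abs_of_pos (div_pos (hw_pos m k) (hw_pos m N)), abs_of_pos h1]
        rw [hnorm]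
        calc |c k| * (w m k / w m N) / (1 + lam k)
            ≤ |c k| * r k ^ m / (1 + lam k) := by
              gcongr
              exact hratio_le k hk.le m
          _ = |c k| / (1 + lam k) * r k ^ m := by ring
      · have h2 := tendsto_pow_atTop_nhds_zero_of_lt_one (hrpos k).le hr1
        simpa using h2.const_mul (|c k| / (1 + lam k))
  have hbound : ∀ (m : ℕ), ∀ k, ‖f m k‖ ≤ |c k| / lam k := by
    intro m k
    rcases lt_or_ge k N with hlt | hge
    · have h0 : f m k = 0 := by simp [hf_def, ih k hlt]
      rw [h0, norm_zero]
      exact div_nonneg (abs_nonneg _) (hpos k).le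
    · have hk : lam N ≤ lam k := hmono.monotone hge
      have h1 : 0 < 1 + lam k := by have := hpos k; linarith
      have hr1 : r k ≤ 1 := by
        rw [hr_def]
        exact (div_le_one (by have := hpos k; linarith)).2 (by linarith)
      have hrat1 : w m k / w m N ≤ 1 :=
        le_trans (hratio_le k hk m) (pow_le_one₀ (hrpos k).le hr1)
      have hnorm : ‖f m k‖ = |c k| * (w m k / w m N) / (1 + lam k) := by
        simp only [hf_def, Real.norm_eq_abs, abs_div, abs_mul,
          abs_of_pos (div_pos (hw_pos m k) (hw_pos m N)), abs_of_pos h1]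
      rw [hnorm]
      calc |c k| * (w m k / w m N) / (1 + lam k)
          ≤ |c k| * 1 / (1 + lam k) := by gcongr
        _ = |c k| / (1 + lam k) := by ring
        _ ≤ |c k| / lam k := by
            gcongr
            · exact hpos k
            · linarith
  have hDCT := tendsto_tsum_of_dominated_convergence (f := f) (g := g)
    hsum hg (Filter.Eventually.of_forall hbound)
  have h0 : Tendsto (fun m => ∑' k, f m k) atTop (𝓝 0) := by
    simpa [hftsum] using (tendsto_const_nhds : Tendsto (fun _ : ℕ => (0:ℝ)) atTop (𝓝 0))
  have heq : ∑' k, g k = c N / (1 + lam N) := by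
    rw [tsum_eq_single N]
    · simp [hg_def]
    · intro b hb
      simp [hg_def, hb]
  have hfin : c N / (1 + lam N) = 0 := by
    have huniq := tendsto_nhds_unique hDCT h0
    rw [heq] at huniq
    exact huniq
  have hden : (1 : ℝ) + lam N ≠ 0 := ne_of_gt (by have := hpos N; linarith)
  exact (div_eq_zero_iff.1 hfin).resolve_right hden
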